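/- Let ε > 0 and let φ : ℝ → ℝ be twice continuously differentiable with φ''(t) + φ(t) + φ(t)³ = 0 for all t, φ(0) = ε, and φ'(0) = 0. Then φ is periodic with period T(ε) = 4·K(κ(ε))/√(1+ε²); that is, φ(t + T(ε)) = φ(t) for all t ∈ ℝ. -/

import Mathlib

open Real Set

/-- The modulus κ(ε) = ε/√(2(1+ε²)). -/
noncomputable def kappaMod (ε : ℝ) : ℝ := ε / Real.sqrt (2 * (1 + ε ^ 2))

/-- The complete elliptic integral of the first kind
K(κ) = ∫₀^{π/2} dθ/√(1 - κ² sin²θ). -/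
noncomputable def ellipticK (κ : ℝ) : ℝ :=
  ∫ θ in (0:ℝ)..(π / 2), 1 / Real.sqrt (1 - κ ^ 2 * Real.sin θ ^ 2)

/-- The frequency Ω(ε) = (π/2)·√(1+ε²)/K(κ(ε)) of the single-mode solution. -/
noncomputable def freqOmega (ε : ℝ) : ℝ :=
  (π / 2) * Real.sqrt (1 + ε ^ 2) / ellipticK (kappaMod ε)

namespace DuffingAux

/-- squared modulus -/
noncomputable def k2 (ε : ℝ) : ℝ := ε ^ 2 / (2 * (1 + ε ^ 2))

lemma kappa_sq (ε : ℝ) : kappaMod ε ^ 2 = k2 ε := by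
  unfold kappaMod k2
  rw [div_pow, Real.sq_sqrt (by positivity)]

lemma k2_nonneg (ε : ℝ) : 0 ≤ k2 ε := by unfold k2; positivity

lemma k2_lt_half (ε : ℝ) : k2 ε < 1 / 2 := by
  unfold k2
  rw [div_lt_iff₀ (by positivity)]
  nlinarith [sq_nonneg ε]

noncomputable def Pf (ε θ : ℝ) : ℝ := 1 - k2 ε * Real.sin θ ^ 2

lemma Pf_ge_half (ε θ : ℝ) : 1 / 2 ≤ Pf ε θ := by
  have h1 : Real.sin θ ^ 2 ≤ 1 := Real.sin_sq_le_one θ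
  have h2 := k2_nonneg ε
  have h3 := k2_lt_half ε
  have : k2 ε * Real.sin θ ^ 2 ≤ k2 ε * 1 := by nlinarith [sq_nonneg (Real.sin θ)]
  unfold Pf; nlinarith

lemma Pf_pos (ε θ : ℝ) : 0 < Pf ε θ := lt_of_lt_of_le (by norm_num) (Pf_ge_half ε θ)

lemma Pf_le_one (ε θ : ℝ) : Pf ε θ ≤ 1 := by
  have := k2_nonneg ε
  unfold Pf; nlinarith [sq_nonneg (Real.sin θ)]

noncomputable def Ig (ε θ : ℝ) : ℝ := 1 / Real.sqrt (Pf ε θ)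

lemma Ig_cont (ε : ℝ) : Continuous (Ig ε) := by
  apply Continuous.div continuous_const
  · exact (Real.continuous_sqrt.comp (by unfold Pf; fun_prop))
  · intro θ
    exact ne_of_gt (Real.sqrt_pos.2 (Pf_pos ε θ))

lemma Ig_ge_one (ε θ : ℝ) : 1 ≤ Ig ε θ := by
  unfold Ig
  rw [le_div_iff₀ (Real.sqrt_pos.2 (Pf_pos ε θ)), one_mul]
  exact Real.sqrt_le_one.2 (Pf_le_one ε θ)

noncomputable def Bf (ε θ : ℝ) : ℝ := ∫ ψ in (0:ℝ)..θ, Ig ε ψ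

lemma Bf_hasDerivAt (ε θ : ℝ) : HasDerivAt (Bf ε) (Ig ε θ) θ :=
  intervalIntegral.integral_hasDerivAt_right ((Ig_cont ε).intervalIntegrable _ _)
    ((Ig_cont ε).stronglyMeasurable.stronglyMeasurableAtFilter)
    (Ig_cont ε).continuousAt

lemma Bf_strictMono (ε : ℝ) : StrictMono (Bf ε) := by
  apply strictMono_of_deriv_pos
  intro θ
  rw [(Bf_hasDerivAt ε θ).deriv]
  linarith [Ig_ge_one ε θ]

lemma Bf_ge (ε θ : ℝ) (h : 0 ≤ θ) : θ ≤ Bf ε θ := by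
  calc θ = ∫ ψ in (0:ℝ)..θ, (1:ℝ) := by simp
  _ ≤ Bf ε θ := by
      apply intervalIntegral.integral_mono_on h intervalIntegrable_const
        ((Ig_cont ε).intervalIntegrable _ _)
      intro x _; exact Ig_ge_one ε x

lemma Bf_le (ε θ : ℝ) (h : θ ≤ 0) : Bf ε θ ≤ θ := by
  have h1 : -θ ≤ ∫ ψ in θ..(0:ℝ), Ig ε ψ := by
    calc -θ = ∫ ψ in θ..(0:ℝ), (1:ℝ) := by simp
    _ ≤ _ := by
        apply intervalIntegral.integral_mono_on (by linarith) intervalIntegrable_const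
          ((Ig_cont ε).intervalIntegrable _ _)
        intro x _; exact Ig_ge_one ε x
  have h2 : Bf ε θ = -∫ ψ in θ..(0:ℝ), Ig ε ψ := by
    unfold Bf; rw [intervalIntegral.integral_symm]
  linarith

noncomputable def Af (ε θ : ℝ) : ℝ := Bf ε θ / Real.sqrt (1 + ε ^ 2)

lemma sqrtc_pos (ε : ℝ) : 0 < Real.sqrt (1 + ε ^ 2) := Real.sqrt_pos.2 (by positivity)

lemma Af_hasDerivAt (ε θ : ℝ) :
    HasDerivAt (Af ε) (Ig ε θ / Real.sqrt (1 + ε ^ 2)) θ :=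
  (Bf_hasDerivAt ε θ).div_const _

lemma Af_strictMono (ε : ℝ) : StrictMono (Af ε) := by
  intro a b h
  unfold Af
  exact (div_lt_div_iff_of_pos_right (sqrtc_pos ε)).2 (Bf_strictMono ε h)

lemma Af_surj (ε : ℝ) : Function.Surjective (Af ε) := by
  have hc : Continuous (Af ε) := by
    rw [continuous_iff_continuousAt]
    exact fun θ => (Af_hasDerivAt ε θ).continuousAt
  apply Continuous.surjective hc
  · apply Filter.tendsto_atTop_mono' Filter.atTop ?_
      (Filter.Tendsto.atTop_div_const (sqrtc_pos ε) Filter.tendsto_id)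
    filter_upwards [Filter.eventually_ge_atTop (0:ℝ)] with θ hθ
    exact (div_le_div_iff_of_pos_right (sqrtc_pos ε)).2 (Bf_ge ε θ hθ)
  · apply Filter.tendsto_atBot_mono' Filter.atBot ?_
      (Filter.Tendsto.atBot_div_const (sqrtc_pos ε) Filter.tendsto_id)
    filter_upwards [Filter.eventually_le_atBot (0:ℝ)] with θ hθ
    exact (div_le_div_iff_of_pos_right (sqrtc_pos ε)).2 (Bf_le ε θ hθ)


noncomputable def ThIso (ε : ℝ) : ℝ ≃o ℝ :=
  StrictMono.orderIsoOfSurjective (Af ε) (Af_strictMono ε) (Af_surj ε)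

noncomputable def Th (ε t : ℝ) : ℝ := (ThIso ε).symm t

lemma Af_Th (ε t : ℝ) : Af ε (Th ε t) = t :=
  StrictMono.orderIsoOfSurjective_self_symm_apply _ (Af_strictMono ε) (Af_surj ε) t

lemma Th_Af (ε θ : ℝ) : Th ε (Af ε θ) = θ :=
  StrictMono.orderIsoOfSurjective_symm_apply_self _ (Af_strictMono ε) (Af_surj ε) θ

lemma Th_cont (ε : ℝ) : Continuous (Th ε) := (ThIso ε).symm.continuous

lemma Af_zero (ε : ℝ) : Af ε 0 = 0 := by
  unfold Af Bf; simp

lemma Th_zero (ε : ℝ) : Th ε 0 = 0 := by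
  have := Th_Af ε 0
  rwa [Af_zero] at this

lemma Th_hasDerivAt (ε t : ℝ) :
    HasDerivAt (Th ε) (Real.sqrt (1 + ε ^ 2) * Real.sqrt (Pf ε (Th ε t))) t := by
  have h1 := Af_hasDerivAt ε (Th ε t)
  have hne : Ig ε (Th ε t) / Real.sqrt (1 + ε ^ 2) ≠ 0 := by
    apply ne_of_gt
    apply div_pos _ (sqrtc_pos ε)
    linarith [Ig_ge_one ε (Th ε t)]
  have h2 := HasDerivAt.of_local_left_inverse ((Th_cont ε).continuousAt) h1 hne
    (Filter.Eventually.of_forall (Af_Th ε))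
  convert h2 using 1
  · rfl
  unfold Ig
  have hs : Real.sqrt (Pf ε (Th ε t)) ≠ 0 := ne_of_gt (Real.sqrt_pos.2 (Pf_pos ε _))
  field_simp

lemma Ig_periodic (ε : ℝ) : Function.Periodic (Ig ε) π := by
  intro θ
  unfold Ig Pf
  rw [Real.sin_add_pi, neg_sq]

lemma Bf_add_two_pi (ε θ : ℝ) : Bf ε (θ + 2 * π) = Bf ε θ + Bf ε (2 * π) := by
  have hper : Function.Periodic (Ig ε) (2 * π) := by
    have := (Ig_periodic ε).nat_mul 2
    simpa using this
  have key : (∫ x in θ..(θ + 2 * π), Ig ε x) = ∫ x in (0:ℝ)..(0 + 2 * π), Ig ε x :=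
    hper.intervalIntegral_add_eq θ 0
  have hadd : (∫ x in (0:ℝ)..θ, Ig ε x) + (∫ x in θ..(θ + 2 * π), Ig ε x)
      = ∫ x in (0:ℝ)..(θ + 2 * π), Ig ε x :=
    intervalIntegral.integral_add_adjacent_intervals
      ((Ig_cont ε).intervalIntegrable 0 θ) ((Ig_cont ε).intervalIntegrable θ (θ + 2 * π))
  unfold Bf
  rw [← hadd, key]
  simp [Bf]

lemma Bf_two_pi (ε : ℝ) : Bf ε (2 * π) = 4 * Bf ε (π / 2) := by
  have h1 : (∫ ψ in π..(2 * π), Ig ε ψ) = Bf ε π := by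
    have key : (∫ x in π..(π + π), Ig ε x) = ∫ x in (0:ℝ)..(0 + π), Ig ε x :=
      (Ig_periodic ε).intervalIntegral_add_eq π 0
    have h2π : π + π = 2 * π := by ring
    rw [h2π, zero_add] at key
    exact key
  have h2 : (∫ ψ in (π / 2)..π, Ig ε ψ) = Bf ε (π / 2) := by
    have hsub := intervalIntegral.integral_comp_sub_left (a := (0:ℝ)) (b := π / 2) (Ig ε) π
    have heq : ∀ x, Ig ε (π - x) = Ig ε x := by
      intro x; unfold Ig Pf; rw [Real.sin_pi_sub]
    simp only [heq] at hsub
    rw [show π - π / 2 = π / 2 by ring, sub_zero] at hsub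
    exact hsub.symm
  have hb2 : Bf ε (2 * π) = Bf ε π + ∫ ψ in π..(2 * π), Ig ε ψ := by
    unfold Bf
    exact (intervalIntegral.integral_add_adjacent_intervals
      ((Ig_cont ε).intervalIntegrable 0 π) ((Ig_cont ε).intervalIntegrable π (2 * π))).symm
  have hbπ : Bf ε π = Bf ε (π / 2) + ∫ ψ in (π / 2)..π, Ig ε ψ := by
    unfold Bf
    exact (intervalIntegral.integral_add_adjacent_intervals
      ((Ig_cont ε).intervalIntegrable 0 (π / 2)) ((Ig_cont ε).intervalIntegrable (π / 2) π)).symm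
  rw [hb2, h1, hbπ, h2]; ring

lemma Bf_half_pi (ε : ℝ) : Bf ε (π / 2) = ellipticK (kappaMod ε) := by
  unfold Bf Ig Pf ellipticK
  rw [kappa_sq]

lemma Af_two_pi (ε : ℝ) :
    Af ε (2 * π) = 4 * ellipticK (kappaMod ε) / Real.sqrt (1 + ε ^ 2) := by
  unfold Af
  rw [Bf_two_pi, Bf_half_pi]

lemma Af_add_two_pi (ε θ : ℝ) : Af ε (θ + 2 * π) = Af ε θ + Af ε (2 * π) := by
  unfold Af
  rw [Bf_add_two_pi, add_div]

lemma Th_add_period (ε t : ℝ) : Th ε (t + Af ε (2 * π)) = Th ε t + 2 * π := by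
  apply (Af_strictMono ε).injective
  rw [Af_Th, Af_add_two_pi, Af_Th]

noncomputable def sol (ε t : ℝ) : ℝ := ε * Real.cos (Th ε t)

noncomputable def dsol (ε t : ℝ) : ℝ :=
  -(ε * Real.sqrt (1 + ε ^ 2)) * (Real.sin (Th ε t) * Real.sqrt (Pf ε (Th ε t)))

lemma sol_hasDerivAt (ε t : ℝ) : HasDerivAt (sol ε) (dsol ε t) t := by
  have h := ((Real.hasDerivAt_cos (Th ε t)).comp t (Th_hasDerivAt ε t)).const_mul ε
  refine h.congr_deriv ?_
  symm
  unfold dsol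
  ring

lemma inner_hasDerivAt (ε θ : ℝ) :
    HasDerivAt (fun x => Real.sin x * Real.sqrt (Pf ε x))
      (Real.cos θ * (1 - 2 * k2 ε * Real.sin θ ^ 2) / Real.sqrt (Pf ε θ)) θ := by
  have hP : HasDerivAt (Pf ε) (-(k2 ε * (2 * Real.sin θ * Real.cos θ))) θ := by
    have h1 : HasDerivAt (fun x : ℝ => Real.sin x ^ 2) (2 * Real.sin θ ^ 1 * Real.cos θ) θ :=
      (Real.hasDerivAt_sin θ).pow 2
    have h2 := (h1.const_mul (k2 ε)).const_sub 1
    refine h2.congr_deriv ?_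
    symm
    ring
  have hs : HasDerivAt (fun x => Real.sqrt (Pf ε x))
      (1 / (2 * Real.sqrt (Pf ε θ)) * (-(k2 ε * (2 * Real.sin θ * Real.cos θ)))) θ :=
    (Real.hasDerivAt_sqrt (ne_of_gt (Pf_pos ε θ))).comp θ hP
  have h := (Real.hasDerivAt_sin θ).mul hs
  refine h.congr_deriv ?_
  symm
  have hsne : Real.sqrt (Pf ε θ) ≠ 0 := ne_of_gt (Real.sqrt_pos.2 (Pf_pos ε θ))
  have hsq : Real.sqrt (Pf ε θ) ^ 2 = Pf ε θ := Real.sq_sqrt (le_of_lt (Pf_pos ε θ))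
  unfold Pf at hsq
  set s := Real.sqrt (Pf ε θ) with hsdef
  have hsq2 : s ^ 2 = 1 - k2 ε * Real.sin θ ^ 2 := by
    rw [hsdef, Real.sq_sqrt (le_of_lt (Pf_pos ε θ))]
    rfl
  field_simp
  linear_combination (-Real.cos θ) * hsq2

lemma dsol_hasDerivAt (ε t : ℝ) :
    HasDerivAt (dsol ε) (-(sol ε t) - sol ε t ^ 3) t := by
  have h := ((inner_hasDerivAt ε (Th ε t)).comp t (Th_hasDerivAt ε t)).const_mul
    (-(ε * Real.sqrt (1 + ε ^ 2)))
  have hd : dsol ε = fun u => -(ε * Real.sqrt (1 + ε ^ 2)) *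
      ((fun x => Real.sin x * Real.sqrt (Pf ε x)) (Th ε u)) := by
    funext u; unfold dsol; ring
  rw [hd]
  refine h.congr_deriv ?_
  symm
  set θ := Th ε t
  have hsne : Real.sqrt (Pf ε θ) ≠ 0 := ne_of_gt (Real.sqrt_pos.2 (Pf_pos ε θ))
  have hc2 : Real.sqrt (1 + ε ^ 2) ^ 2 = 1 + ε ^ 2 := Real.sq_sqrt (by positivity)
  have hsc : Real.sin θ ^ 2 = 1 - Real.cos θ ^ 2 := by
    have := Real.sin_sq_add_cos_sq θ; linarith
  have hk : k2 ε * (2 * (1 + ε ^ 2)) = ε ^ 2 := by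
    unfold k2; field_simp
  have key : (1 + ε ^ 2) * (1 - 2 * k2 ε * Real.sin θ ^ 2) = 1 + ε ^ 2 * Real.cos θ ^ 2 := by
    linear_combination (-(Real.sin θ ^ 2)) * hk + (-(ε ^ 2)) * hsc
  have hr : Real.cos θ * (1 - 2 * k2 ε * Real.sin θ ^ 2) / Real.sqrt (Pf ε θ) *
      (Real.sqrt (1 + ε ^ 2) * Real.sqrt (Pf ε θ))
      = Real.sqrt (1 + ε ^ 2) * (Real.cos θ * (1 - 2 * k2 ε * Real.sin θ ^ 2)) := by
    field_simp
  rw [hr]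
  unfold sol
  linear_combination (ε * Real.cos θ * (1 - 2 * k2 ε * Real.sin θ ^ 2)) * hc2 +
    ε * Real.cos θ * key

lemma sol_zero (ε : ℝ) : sol ε 0 = ε := by
  unfold sol; rw [Th_zero]; simp

lemma dsol_zero (ε : ℝ) : dsol ε 0 = 0 := by
  unfold dsol; rw [Th_zero]; simp

lemma sol_periodic (ε t : ℝ) :
    sol ε (t + 4 * ellipticK (kappaMod ε) / Real.sqrt (1 + ε ^ 2)) = sol ε t := by
  unfold sol
  rw [← Af_two_pi, Th_add_period, Real.cos_add_two_pi]

lemma dsol_periodic (ε t : ℝ) :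
    dsol ε (t + 4 * ellipticK (kappaMod ε) / Real.sqrt (1 + ε ^ 2)) = dsol ε t := by
  unfold dsol
  rw [← Af_two_pi, Th_add_period]
  simp [Pf, Real.sin_add_two_pi]

lemma sol_bound (ε t : ℝ) (hε : 0 ≤ ε) : |sol ε t| ≤ ε := by
  unfold sol
  rw [abs_mul, abs_of_nonneg hε]
  nlinarith [Real.abs_cos_le_one (Th ε t), abs_nonneg (Real.cos (Th ε t))]

lemma dsol_bound (ε t : ℝ) (hε : 0 ≤ ε) : |dsol ε t| ≤ ε * Real.sqrt (1 + ε ^ 2) := by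
  unfold dsol
  rw [abs_mul, abs_neg, abs_mul, abs_of_nonneg hε,
    abs_of_nonneg (le_of_lt (sqrtc_pos ε)), abs_mul]
  have h1 : |Real.sin (Th ε t)| ≤ 1 := Real.abs_sin_le_one _
  have h2 : |Real.sqrt (Pf ε (Th ε t))| ≤ 1 := by
    rw [abs_of_nonneg (Real.sqrt_nonneg _)]
    exact Real.sqrt_le_one.2 (Pf_le_one ε _)
  have h3 : 0 ≤ ε * Real.sqrt (1 + ε ^ 2) := by positivity
  have h4 : |Real.sin (Th ε t)| * |Real.sqrt (Pf ε (Th ε t))| ≤ 1 := by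
    nlinarith [abs_nonneg (Real.sin (Th ε t)), abs_nonneg (Real.sqrt (Pf ε (Th ε t)))]
  nlinarith [h3, h4]

lemma vf_lipschitz (R : ℝ) :
    LipschitzOnWith (Real.toNNReal (1 + 3 * R ^ 2))
      (fun p : ℝ × ℝ => ((p.2, -p.1 - p.1 ^ 3) : ℝ × ℝ)) (Metric.closedBall 0 R) := by
  rw [lipschitzOnWith_iff_dist_le_mul]
  intro p hp q hq
  rw [Metric.mem_closedBall, dist_zero_right] at hp hq
  have hp1 : |p.1| ≤ R := le_trans (by rw [← Real.norm_eq_abs]; exact norm_fst_le p) hp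
  have hq1 : |q.1| ≤ R := le_trans (by rw [← Real.norm_eq_abs]; exact norm_fst_le q) hq
  have hK : (Real.toNNReal (1 + 3 * R ^ 2) : ℝ) = 1 + 3 * R ^ 2 :=
    Real.coe_toNNReal _ (by positivity)
  rw [hK, Prod.dist_eq, Prod.dist_eq]
  simp only [Real.dist_eq]
  have hmax0 : (0:ℝ) ≤ max |p.1 - q.1| |p.2 - q.2| :=
    le_trans (abs_nonneg _) (le_max_left _ _)
  apply max_le
  · have h1 : |p.2 - q.2| ≤ max |p.1 - q.1| |p.2 - q.2| := le_max_right _ _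
    nlinarith [sq_nonneg R]
  · have h1 : (-p.1 - p.1 ^ 3) - (-q.1 - q.1 ^ 3)
        = (q.1 - p.1) * (1 + (p.1 ^ 2 + p.1 * q.1 + q.1 ^ 2)) := by ring
    rw [h1, abs_mul]
    have h2 : |1 + (p.1 ^ 2 + p.1 * q.1 + q.1 ^ 2)| ≤ 1 + 3 * R ^ 2 := by
      rw [abs_le]
      constructor <;>
        nlinarith [sq_nonneg (p.1 + q.1), sq_nonneg (p.1 - q.1), sq_abs p.1, sq_abs q.1,
          abs_nonneg p.1, abs_nonneg q.1]
    have h3 : |q.1 - p.1| ≤ max |p.1 - q.1| |p.2 - q.2| := by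
      rw [abs_sub_comm]; exact le_max_left _ _
    nlinarith [abs_nonneg (q.1 - p.1), mul_le_mul h3 h2 (abs_nonneg _) hmax0]

end DuffingAux


open DuffingAux in
/-- the Duffing solution with data (ε,0) is periodic with period
4K(κ(ε))/√(1+ε²). -/
theorem duffing_period (ε : ℝ) (hε : 0 < ε) (φ : ℝ → ℝ) (hφ : ContDiff ℝ 2 φ)
    (hduff : ∀ t : ℝ, deriv (deriv φ) t + φ t + (φ t) ^ 3 = 0)
    (h0 : φ 0 = ε) (h0' : deriv φ 0 = 0) :
    ∀ t : ℝ, φ (t + 4 * ellipticK (kappaMod ε) / Real.sqrt (1 + ε ^ 2)) = φ t := by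
  -- basic differentiability
  have hφ' : ContDiff ℝ (1 + 1) φ := by norm_num; exact hφ
  have hφ1 : Differentiable ℝ φ := hφ.differentiable two_ne_zero
  have hφ2 : Differentiable ℝ (deriv φ) :=
    (contDiff_succ_iff_deriv.mp hφ').2.2.differentiable one_ne_zero
  have hd1 : ∀ t, HasDerivAt φ (deriv φ t) t := fun t => (hφ1 t).hasDerivAt
  have hd2 : ∀ t, HasDerivAt (deriv φ) (-(φ t) - φ t ^ 3) t := by
    intro t
    have h := (hφ2 t).hasDerivAt
    have : deriv (deriv φ) t = -(φ t) - φ t ^ 3 := by linarith [hduff t]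
    rwa [this] at h
  -- energy conservation
  set E : ℝ → ℝ := fun t => deriv φ t ^ 2 / 2 + φ t ^ 2 / 2 + φ t ^ 4 / 4 with hEdef
  have hE : ∀ t, E t = E 0 := by
    have hEd : ∀ t, HasDerivAt E 0 t := by
      intro t
      have h := ((((hd2 t).pow 2).div_const 2).add (((hd1 t).pow 2).div_const 2)).add
        (((hd1 t).pow 4).div_const 4)
      refine h.congr_deriv ?_
      symm
      ring
    intro t
    exact is_const_of_deriv_eq_zero (fun x => (hEd x).differentiableAt)
      (fun x => (hEd x).deriv) t 0
  have hE0 : E 0 = ε ^ 2 / 2 + ε ^ 4 / 4 := by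
    rw [hEdef]; simp [h0, h0']
  -- bounds on φ and deriv φ
  set R : ℝ := (ε + 1) ^ 3 with hRdef
  have hR0 : 0 ≤ R := by rw [hRdef]; positivity
  have habs : ∀ x : ℝ, x ^ 2 ≤ R ^ 2 → |x| ≤ R := by
    intro x hx
    rw [← Real.sqrt_sq_eq_abs]
    calc Real.sqrt (x ^ 2) ≤ Real.sqrt (R ^ 2) := Real.sqrt_le_sqrt hx
    _ = R := Real.sqrt_sq hR0
  have hφbd : ∀ t, |φ t| ≤ R ∧ |deriv φ t| ≤ R := by
    intro t
    have h1 := hE t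
    rw [hE0, hEdef] at h1
    simp only at h1
    constructor
    · apply habs
      rw [hRdef]
      nlinarith [sq_nonneg (deriv φ t), sq_nonneg (φ t ^ 2), hε]
    · apply habs
      rw [hRdef]
      nlinarith [sq_nonneg (φ t), sq_nonneg (φ t ^ 2), hε]
  have hsolbd : ∀ t, |sol ε t| ≤ R ∧ |dsol ε t| ≤ R := by
    intro t
    have h1 := sol_bound ε t hε.le
    have h2 := dsol_bound ε t hε.le
    have h3 : Real.sqrt (1 + ε ^ 2) ≤ 1 + ε ^ 2 := by
      nlinarith [Real.sq_sqrt (show (0:ℝ) ≤ 1 + ε ^ 2 by positivity),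
        Real.sqrt_nonneg (1 + ε ^ 2), sq_nonneg (Real.sqrt (1 + ε ^ 2) - 1), sq_nonneg ε]
    constructor
    · rw [hRdef] at *
      nlinarith [hε, sq_nonneg ε]
    · rw [hRdef] at *
      nlinarith [hε, sq_nonneg ε, sqrtc_pos ε]
  -- uniqueness via Gronwall
  have hlip := vf_lipschitz R
  have hmain : ∀ u : ℝ, φ u = sol ε u := by
    intro u
    have hab : (0:ℝ) ∈ Ioo (-(|u| + 1)) (|u| + 1) := by
      constructor
      · have := abs_nonneg u; linarith
      · have := abs_nonneg u; linarith
    have hcontf : ContinuousOn (fun t => ((φ t, deriv φ t) : ℝ × ℝ))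
        (Icc (-(|u| + 1)) (|u| + 1)) :=
      ((hφ1.continuous).prodMk (hφ2.continuous)).continuousOn
    have hcontg : ContinuousOn (fun t => ((sol ε t, dsol ε t) : ℝ × ℝ))
        (Icc (-(|u| + 1)) (|u| + 1)) := by
      apply Continuous.continuousOn
      apply Continuous.prodMk
      · exact continuous_iff_continuousAt.2 fun x => (sol_hasDerivAt ε x).continuousAt
      · exact continuous_iff_continuousAt.2 fun x => (dsol_hasDerivAt ε x).continuousAt
    have hmemf : ∀ t ∈ Ioo (-(|u| + 1)) (|u| + 1),
        ((φ t, deriv φ t) : ℝ × ℝ) ∈ Metric.closedBall (0 : ℝ × ℝ) R := by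
      intro t _
      rw [Metric.mem_closedBall, dist_zero_right, Prod.norm_def]
      simp only [Real.norm_eq_abs]
      exact max_le (hφbd t).1 (hφbd t).2
    have hmemg : ∀ t ∈ Ioo (-(|u| + 1)) (|u| + 1),
        ((sol ε t, dsol ε t) : ℝ × ℝ) ∈ Metric.closedBall (0 : ℝ × ℝ) R := by
      intro t _
      rw [Metric.mem_closedBall, dist_zero_right, Prod.norm_def]
      simp only [Real.norm_eq_abs]
      exact max_le (hsolbd t).1 (hsolbd t).2
    have hderf : ∀ t ∈ Ioo (-(|u| + 1)) (|u| + 1),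
        HasDerivAt (fun t => ((φ t, deriv φ t) : ℝ × ℝ))
          ((fun _ (p : ℝ × ℝ) => ((p.2, -p.1 - p.1 ^ 3) : ℝ × ℝ)) t (φ t, deriv φ t)) t :=
      fun t _ => (hd1 t).prodMk (hd2 t)
    have hderg : ∀ t ∈ Ioo (-(|u| + 1)) (|u| + 1),
        HasDerivAt (fun t => ((sol ε t, dsol ε t) : ℝ × ℝ))
          ((fun _ (p : ℝ × ℝ) => ((p.2, -p.1 - p.1 ^ 3) : ℝ × ℝ)) t (sol ε t, dsol ε t)) t :=
      fun t _ => (sol_hasDerivAt ε t).prodMk (dsol_hasDerivAt ε t)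
    have hini : ((φ 0, deriv φ 0) : ℝ × ℝ) = ((sol ε 0, dsol ε 0) : ℝ × ℝ) := by
      rw [h0, h0', sol_zero, dsol_zero]
    have key := ODE_solution_unique_of_mem_Icc (fun _ _ => hlip) hab
      hcontf hderf hmemf hcontg hderg hmemg hini
    have hu : u ∈ Icc (-(|u| + 1)) (|u| + 1) := by
      constructor
      · have := neg_abs_le u; linarith
      · have := le_abs_self u; linarith
    exact congrArg Prod.fst (key hu)
  intro t
  rw [hmain t, hmain (t + 4 * ellipticK (kappaMod ε) / Real.sqrt (1 + ε ^ 2))]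
  exact sol_periodic ε t
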